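/- Combining Proposition 2.1 with the elimination of q₁ and q₂: the only 6-tuple (q₁,…,q₃') in the free associative algebra K⟨D₁,…,D₃'⟩ satisfying all three equations q₁ + q₁' − q₂'D₃' − q₃D₂ = 0, q₂ + q₂' − q₃'D₁' − q₁D₃ = 0, q₃ + q₃' − q₁'D₂' − q₂D₁ = 0 is the zero tuple. -/

import Mathlib

open MonoidAlgebra FreeMonoid

/-- suffix distinguishing: `w * of i` is not of the form `d * of j` when `i ≠ j`. -/
lemma no_suffix {α : Type*} {i j : α} (hij : i ≠ j) (w : FreeMonoid α) :
    ¬∃ d : FreeMonoid α, w * of i = d * of j := by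
  rintro ⟨d, hd⟩
  have : toList (w * of i) = toList (d * of j) := by rw [hd]
  rw [toList_mul, toList_mul] at this
  have := congrArg List.reverse this
  simp [toList_of] at this
  exact hij this.1

lemma coeff_key {K : Type*} [Field K] (a b : MonoidAlgebra K (FreeMonoid (Fin 6)))
    {i j : Fin 6} (hij : i ≠ j) (w : FreeMonoid (Fin 6)) :
    (a * MonoidAlgebra.single (of i) 1 + b * MonoidAlgebra.single (of j) 1 :
      MonoidAlgebra K (FreeMonoid (Fin 6))).coeff (w * of i) = a.coeff w := by
  rw [MonoidAlgebra.coeff_add, Finsupp.add_apply,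
    MonoidAlgebra.coeff_mul_single_eq_coeff_mul (x := a) w
      (fun c _ => mul_left_inj (a := of i) (b := c) (c := w)),
    MonoidAlgebra.mul_single_apply_of_not_exists_mul _ _ (no_suffix hij w)]
  ring

theorem stmt_18 (K : Type*) [Field K]
    (q : Fin 6 → FreeAlgebra K (Fin 6))
    (h1 : q 0 + q 3 - q 4 * FreeAlgebra.ι K 5 - q 2 * FreeAlgebra.ι K 1 = 0)
    (h2 : q 1 + q 4 - q 5 * FreeAlgebra.ι K 3 - q 0 * FreeAlgebra.ι K 2 = 0)
    (h3 : q 2 + q 5 - q 3 * FreeAlgebra.ι K 4 - q 1 * FreeAlgebra.ι K 0 = 0) :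
    q = 0 := by
  classical
  set e := FreeAlgebra.equivMonoidAlgebraFreeMonoid (R := K) (X := Fin 6) with he
  have hι : ∀ i : Fin 6, e (FreeAlgebra.ι K i)
      = MonoidAlgebra.single (of i) (1 : K) := by
    intro i
    simp [he, FreeAlgebra.equivMonoidAlgebraFreeMonoid, MonoidAlgebra.of_apply]
  set p : Fin 6 → MonoidAlgebra K (FreeMonoid (Fin 6)) := fun i => e (q i) with hp
  -- transfer equations
  have E1 : p 0 + p 3 = p 4 * MonoidAlgebra.single (of (5 : Fin 6)) 1
      + p 2 * MonoidAlgebra.single (of (1 : Fin 6)) 1 := by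
    have h := congrArg e h1
    simp only [map_sub, map_add, map_mul, map_zero, hι, hp] at h
    rw [sub_sub, sub_eq_zero] at h
    exact h
  have E2 : p 1 + p 4 = p 5 * MonoidAlgebra.single (of (3 : Fin 6)) 1
      + p 0 * MonoidAlgebra.single (of (2 : Fin 6)) 1 := by
    have h := congrArg e h2
    simp only [map_sub, map_add, map_mul, map_zero, hι, hp] at h
    rw [sub_sub, sub_eq_zero] at h
    exact h
  have E3 : p 2 + p 5 = p 3 * MonoidAlgebra.single (of (4 : Fin 6)) 1
      + p 1 * MonoidAlgebra.single (of (0 : Fin 6)) 1 := by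
    have h := congrArg e h3
    simp only [map_sub, map_add, map_mul, map_zero, hι, hp] at h
    rw [sub_sub, sub_eq_zero] at h
    exact h
  -- it suffices to show p = 0
  suffices hpz : ∀ i, p i = 0 by
    funext i
    have h0 : e (q i) = e 0 := by rw [map_zero]; exact hpz i
    have hfin : q i = 0 := e.injective h0
    fin_cases i <;> simpa using hfin
  by_contra hcon
  push_neg at hcon
  obtain ⟨j0, hj0⟩ := hcon
  set T : Finset (FreeMonoid (Fin 6)) := Finset.univ.biUnion (fun i => (p i).coeff.support) with hT
  have hTne : T.Nonempty := by
    obtain ⟨w, hw⟩ := Finsupp.support_nonempty_iff.2 (mt MonoidAlgebra.coeff_eq_zero.1 hj0)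
    exact ⟨w, Finset.mem_biUnion.2 ⟨j0, Finset.mem_univ _, hw⟩⟩
  set N : ℕ := T.sup FreeMonoid.length with hN
  have hbound : ∀ (i : Fin 6) (u : FreeMonoid (Fin 6)), N < u.length → (p i).coeff u = 0 := by
    intro i u hu
    by_contra h
    have hmem : u ∈ T := Finset.mem_biUnion.2 ⟨i, Finset.mem_univ _, Finsupp.mem_support_iff.2 h⟩
    exact absurd (Finset.le_sup (f := FreeMonoid.length) hmem) (not_le.2 hu)
  -- every coefficient at a word of length N vanishes
  have key : ∀ (i : Fin 6) (w : FreeMonoid (Fin 6)), w.length = N → (p i).coeff w = 0 := by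
    intro i w hw
    have hlen : ∀ j : Fin 6, N < (w * of j).length := by
      intro j
      rw [length_mul, length_of, hw]; omega
    have z4 : (p 4).coeff w = 0 := by
      have h := congrArg (fun f : MonoidAlgebra K (FreeMonoid (Fin 6)) =>
        f.coeff (w * of (5 : Fin 6))) E1
      rw [coeff_key _ _ (show (5:Fin 6) ≠ 1 by decide), MonoidAlgebra.coeff_add, Finsupp.add_apply,
        hbound 0 _ (hlen 5), hbound 3 _ (hlen 5)] at h
      simpa using h.symm
    have z2 : (p 2).coeff w = 0 := by
      have h := congrArg (fun f : MonoidAlgebra K (FreeMonoid (Fin 6)) =>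
        f.coeff (w * of (1 : Fin 6))) E1
      rw [add_comm (p 4 * _) (p 2 * _), coeff_key _ _ (show (1:Fin 6) ≠ 5 by decide),
        MonoidAlgebra.coeff_add, Finsupp.add_apply, hbound 0 _ (hlen 1), hbound 3 _ (hlen 1)] at h
      simpa using h.symm
    have z5 : (p 5).coeff w = 0 := by
      have h := congrArg (fun f : MonoidAlgebra K (FreeMonoid (Fin 6)) =>
        f.coeff (w * of (3 : Fin 6))) E2
      rw [coeff_key _ _ (show (3:Fin 6) ≠ 2 by decide), MonoidAlgebra.coeff_add, Finsupp.add_apply,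
        hbound 1 _ (hlen 3), hbound 4 _ (hlen 3)] at h
      simpa using h.symm
    have z0 : (p 0).coeff w = 0 := by
      have h := congrArg (fun f : MonoidAlgebra K (FreeMonoid (Fin 6)) =>
        f.coeff (w * of (2 : Fin 6))) E2
      rw [add_comm (p 5 * _) (p 0 * _), coeff_key _ _ (show (2:Fin 6) ≠ 3 by decide),
        MonoidAlgebra.coeff_add, Finsupp.add_apply, hbound 1 _ (hlen 2), hbound 4 _ (hlen 2)] at h
      simpa using h.symm
    have z3 : (p 3).coeff w = 0 := by
      have h := congrArg (fun f : MonoidAlgebra K (FreeMonoid (Fin 6)) =>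
        f.coeff (w * of (4 : Fin 6))) E3
      rw [coeff_key _ _ (show (4:Fin 6) ≠ 0 by decide), MonoidAlgebra.coeff_add, Finsupp.add_apply,
        hbound 2 _ (hlen 4), hbound 5 _ (hlen 4)] at h
      simpa using h.symm
    have z1 : (p 1).coeff w = 0 := by
      have h := congrArg (fun f : MonoidAlgebra K (FreeMonoid (Fin 6)) =>
        f.coeff (w * of (0 : Fin 6))) E3
      rw [add_comm (p 3 * _) (p 1 * _), coeff_key _ _ (show (0:Fin 6) ≠ 4 by decide),
        MonoidAlgebra.coeff_add, Finsupp.add_apply, hbound 2 _ (hlen 0), hbound 5 _ (hlen 0)] at h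
      simpa using h.symm
    fin_cases i <;> assumption
  obtain ⟨w0, hw0T, hw0len⟩ := Finset.exists_mem_eq_sup T hTne FreeMonoid.length
  obtain ⟨i0, _, hi0⟩ := Finset.mem_biUnion.1 hw0T
  exact (Finsupp.mem_support_iff.1 hi0) (key i0 w0 hw0len.symm)
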